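/- For n ≥ 1 and F : ℂ → ℂ, the (1, x-y)-difference over the geometric nodes equals (up to constant) the n-th q-difference: Σ_{k=0}^{n} F(xq^k) / ∏_{i=0,i≠k}^{n} (xq^i - xq^k) = ((-1)^n / (q;q)_n) · D_{q,x}^n F(x), where D_{q,x}F(x) = (F(x)-F(qx))/x. -/

import Mathlib

noncomputable def qpoch (a q : ℂ) (n : ℕ) : ℂ := ∏ i ∈ Finset.range n, (1 - a * q ^ i)

noncomputable def qdiff (q : ℂ) (F : ℂ → ℂ) : ℂ → ℂ := fun x => (F x - F (q * x)) / x

private lemma qpoch_succ (q : ℂ) (n : ℕ) :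
    qpoch q q (n + 1) = qpoch q q n * (1 - q ^ (n + 1)) := by
  rw [qpoch, Finset.prod_range_succ, ← qpoch, pow_succ]
  ring

private lemma sum_rec (q x : ℂ) (F : ℂ → ℂ) (n : ℕ)
    (hd : ∀ i ≤ n + 1, ∀ j ≤ n + 1, i ≠ j → x * q ^ i ≠ x * q ^ j) :
    (∑ k ∈ Finset.range (n + 2),
        F (x * q ^ k) / ∏ i ∈ (Finset.range (n + 2)).erase k, (x * q ^ i - x * q ^ k)) =
    ((∑ k ∈ Finset.range (n + 1),
        F ((q * x) * q ^ k) /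
          ∏ i ∈ (Finset.range (n + 1)).erase k, ((q * x) * q ^ i - (q * x) * q ^ k)) -
      ∑ k ∈ Finset.range (n + 1),
        F (x * q ^ k) / ∏ i ∈ (Finset.range (n + 1)).erase k, (x * q ^ i - x * q ^ k)) /
      (x - x * q ^ (n + 1)) := by
  have hne : ∀ i ≤ n+1, ∀ j ≤ n+1, i ≠ j → x * q ^ i - x * q ^ j ≠ 0 := fun i hi j hj hij =>
    sub_ne_zero.mpr (hd i hi j hj hij)
  have htop : x - x * q ^ (n + 1) ≠ 0 := by
    have := hne 0 (by omega) (n+1) (by omega) (by omega)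
    simpa using this
  have hA : (∑ k ∈ Finset.range (n + 1),
        F ((q * x) * q ^ k) /
          ∏ i ∈ (Finset.range (n + 1)).erase k, ((q * x) * q ^ i - (q * x) * q ^ k)) =
      ∑ k ∈ Finset.range (n + 1),
        F (x * q ^ (k+1)) /
          ∏ i ∈ (Finset.range (n + 1)).erase k, (x * q ^ (i+1) - x * q ^ (k+1)) := by
    refine Finset.sum_congr rfl fun k _ => ?_
    congr 1
    · congr 1; ring
    · refine Finset.prod_congr rfl fun i _ => ?_; ring
  rw [hA, eq_div_iff htop, Finset.sum_mul]
  have step : ∀ k ∈ Finset.range (n+2),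
      (F (x * q ^ k) / ∏ i ∈ (Finset.range (n + 2)).erase k, (x * q ^ i - x * q ^ k)) *
        (x - x * q ^ (n + 1))
      = (if k = 0 then 0 else F (x * q ^ k) /
            ∏ i ∈ (Finset.range (n + 1)).erase (k - 1), (x * q ^ (i+1) - x * q ^ k))
        - (if k = n + 1 then 0 else F (x * q ^ k) /
            ∏ i ∈ (Finset.range (n + 1)).erase k, (x * q ^ i - x * q ^ k)) := by
    intro k hk
    have hk2 : k < n + 2 := Finset.mem_range.mp hk
    have expand : x - x * q ^ (n+1) = (x - x * q ^ k) - (x * q ^ (n+1) - x * q ^ k) := by ring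
    rw [expand, mul_sub]
    congr 1
    · rcases Nat.eq_zero_or_pos k with h0 | h0
      · subst h0; simp
      · rw [if_neg (by omega)]
        have hmem : (0:ℕ) ∈ (Finset.range (n+2)).erase k := by
          simp [Finset.mem_erase]; omega
        rw [← Finset.mul_prod_erase _ _ hmem]
        have h0k : x * q ^ (0:ℕ) - x * q ^ k = x - x * q ^ k := by simp
        rw [h0k]
        have hreindex : ∏ i ∈ (((Finset.range (n+2)).erase k).erase 0), (x * q ^ i - x * q ^ k)
            = ∏ i ∈ (Finset.range (n+1)).erase (k-1), (x * q ^ (i+1) - x * q ^ k) := by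
          refine Finset.prod_nbij' (fun i => i - 1) (fun i => i + 1) ?_ ?_ ?_ ?_ ?_
          · intro a ha
            simp only [Finset.mem_erase, Finset.mem_range] at ha ⊢
            omega
          · intro a ha
            simp only [Finset.mem_erase, Finset.mem_range] at ha ⊢
            omega
          · intro a ha
            simp only [Finset.mem_erase, Finset.mem_range] at ha
            show a - 1 + 1 = a
            omega
          · intro a ha
            show a + 1 - 1 = a
            omega
          · intro a ha
            simp only [Finset.mem_erase, Finset.mem_range] at ha
            have : a - 1 + 1 = a := by omega
            rw [this]
        rw [hreindex]
        have hc : x - x * q ^ k ≠ 0 := by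
          have := hne 0 (by omega) k (by omega) (by omega)
          simpa using this
        rw [div_mul_eq_mul_div, mul_comm (F (x * q ^ k)) (x - x * q ^ k), mul_div_mul_left _ _ hc]
    · rcases eq_or_ne k (n+1) with h1 | h1
      · subst h1; simp
      · rw [if_neg h1]
        have hsplit : (Finset.range (n+2)).erase k
            = insert (n+1) ((Finset.range (n+1)).erase k) := by
          rw [Finset.range_add_one, Finset.erase_insert_of_ne (by omega)]
        rw [hsplit, Finset.prod_insert (by simp)]
        have hc : x * q ^ (n+1) - x * q ^ k ≠ 0 := hne (n+1) le_rfl k (by omega) (by omega)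
        rw [div_mul_eq_mul_div, mul_comm (F (x * q ^ k)) (x * q ^ (n+1) - x * q ^ k),
          mul_div_mul_left _ _ hc]
  rw [Finset.sum_congr rfl step, Finset.sum_sub_distrib]
  congr 1
  · rw [Finset.sum_range_succ']
    simp only [Nat.succ_ne_zero, if_false, if_true, Nat.add_sub_cancel, reduceIte, add_zero]
  · rw [Finset.sum_range_succ, if_pos rfl, add_zero]
    refine Finset.sum_congr rfl fun k hk => ?_
    rw [if_neg (by simp at hk; omega)]

private lemma aux_main (q : ℂ) (hq : q ≠ 0) (F : ℂ → ℂ) : ∀ n : ℕ, ∀ x : ℂ, x ≠ 0 →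
    qpoch q q n ≠ 0 → (∀ i ≤ n, ∀ j ≤ n, i ≠ j → x * q ^ i ≠ x * q ^ j) →
    (∑ k ∈ Finset.range (n + 1),
        F (x * q ^ k) / ∏ i ∈ (Finset.range (n + 1)).erase k, (x * q ^ i - x * q ^ k)) =
      (-1) ^ n / qpoch q q n * (qdiff q)^[n] F x := by
  intro n
  induction n with
  | zero => intro x hx _ _; simp [qpoch]
  | succ n ih =>
    intro x hx hpoch hdist
    have hpoch' : qpoch q q n ≠ 0 := by
      intro h; exact hpoch (by rw [qpoch_succ, h, zero_mul])
    have hq1 : (1 : ℂ) - q ^ (n+1) ≠ 0 := by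
      intro h; exact hpoch (by rw [qpoch_succ, h, mul_zero])
    have hxq : x - x * q ^ (n+1) ≠ 0 := by
      intro h
      rcases mul_eq_zero.mp (show x * (1 - q ^ (n+1)) = 0 by linear_combination h) with h' | h'
      · exact hx h'
      · exact hq1 h'
    rw [sum_rec q x F n hdist,
      ih (q*x) (mul_ne_zero hq hx) hpoch' ?_, ih x hx hpoch' ?_]
    · rw [qpoch_succ, Function.iterate_succ_apply']
      show _ = (-1)^(n+1) / (qpoch q q n * (1 - q ^ (n+1))) *
        ((((qdiff q)^[n] F) x - ((qdiff q)^[n] F) (q * x)) / x)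
      field_simp
      ring
    · intro i hi j hj hij; exact hdist i (by omega) j (by omega) hij
    · intro i hi j hj hij
      have h2 := hdist (i+1) (by omega) (j+1) (by omega) (by omega)
      intro h; apply h2
      rw [pow_succ, pow_succ]
      linear_combination h

theorem divided_difference_geometric_nodes (q x : ℂ) (n : ℕ) (hn : 1 ≤ n) (hx : x ≠ 0)
    (hpoch : qpoch q q n ≠ 0)
    (hdist : ∀ i ≤ n, ∀ j ≤ n, i ≠ j → x * q ^ i ≠ x * q ^ j) (F : ℂ → ℂ) :
    (∑ k ∈ Finset.range (n + 1),
        F (x * q ^ k) / ∏ i ∈ (Finset.range (n + 1)).erase k, (x * q ^ i - x * q ^ k)) =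
      (-1) ^ n / qpoch q q n * (qdiff q)^[n] F x := by
  by_cases hq : q = 0
  · subst hq
    obtain rfl | hn2 : n = 1 ∨ 2 ≤ n := by omega
    · simp only [show (Finset.range 2).erase 0 = {1} from by decide,
        show (Finset.range 2).erase 1 = {0} from by decide,
        Finset.sum_range_succ, Finset.sum_range_zero, Finset.prod_singleton, qpoch, qdiff,
        Function.iterate_one]
      norm_num
      field_simp
      ring
    · exact absurd (hdist 1 (by omega) 2 (by omega) (by omega)) (by norm_num)
  · exact aux_main q hq F n x hx hpoch hdist
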